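/- Let μ ∈ (0,2) and set f_λ(x) = (λ + ⟨x⟩^{-μ})^{1/2} for λ ≥ 0, x ∈ ℝ^d. Let F_- denote the multiplication operator by the indicator of {x : λ < ⟨x⟩^{-μ}}. Then there exists C = C(μ) > 0, independent of λ ∈ [0, λ₀] (any fixed λ₀ > 0), such that for all u in the Besov space B(⟨x⟩), ‖f_λ^{-1/2} F_- u‖_{B(f_λ⟨x⟩)} ≤ C ‖u‖_{B(⟨x⟩)}, where B(g) for a positive function g denotes the dyadic Besov space of the multiplication operator by g on L²(ℝ^d). -/

import Mathlib

open MeasureTheory Filter Topology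
open scoped ENNReal

noncomputable section

/-- The dyadic radii: `R_0 = 0`, `R_j = 2^(j-1)` for `j ≥ 1`
(here indexed so that `dyadicR (k+1) = 2^k`). -/
def dyadicR : ℕ → ℝ
  | 0 => 0
  | k + 1 => 2 ^ k

/-- For the self-adjoint multiplication operator by the real function `a` on `L²(μ)`,
the norm of the spectral block `F(R_k ≤ |A| < R_{k+1}) u`, i.e. of the restriction of
`u` to `{R_k ≤ |a| < R_{k+1}}`, valued in `ℝ≥0∞`. -/
def blockE {α : Type*} [MeasurableSpace α] (μ : Measure α) (a : α → ℝ) (u : α → ℂ)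
    (k : ℕ) : ℝ≥0∞ :=
  eLpNorm (Set.indicator {x | dyadicR k ≤ |a x| ∧ |a x| < dyadicR (k + 1)} u) 2 μ

/-- The Besov norm `‖u‖_{B(a)} = Σ_j R_j^{1/2} ‖F_j u‖` of the multiplication
operator by `a` on `L²(μ)`, valued in `ℝ≥0∞`; `u ∈ B(a)` iff this is finite. -/
def besovE {α : Type*} [MeasurableSpace α] (μ : Measure α) (a : α → ℝ) (u : α → ℂ) :
    ℝ≥0∞ :=
  ∑' k : ℕ, ENNReal.ofReal (Real.sqrt (dyadicR (k + 1))) * blockE μ a u k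

/-- The dual Besov norm `‖u‖_{B(a)*} = sup_j R_j^{-1/2} ‖F_j u‖`, valued in `ℝ≥0∞`. -/
def dualE {α : Type*} [MeasurableSpace α] (μ : Measure α) (a : α → ℝ) (u : α → ℂ) :
    ℝ≥0∞ :=
  ⨆ k : ℕ, (ENNReal.ofReal (Real.sqrt (dyadicR (k + 1))))⁻¹ * blockE μ a u k

/-- The Japanese bracket `⟨x⟩ = (|x|² + 1)^{1/2}` on `ℝ^d`. -/
def jap {d : ℕ} (x : EuclideanSpace ℝ (Fin d)) : ℝ := Real.sqrt (‖x‖ ^ 2 + 1)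

/-! ### Auxiliary lemmas -/

private lemma rpow_half_sum_le (s : Finset ℕ) (f : ℕ → ℝ≥0∞) :
    (∑ i ∈ s, f i) ^ (1 / 2 : ℝ) ≤ ∑ i ∈ s, (f i) ^ (1 / 2 : ℝ) := by
  induction s using Finset.cons_induction with
  | empty => simp [ENNReal.zero_rpow_of_pos]
  | cons a s ha ih =>
    rw [Finset.sum_cons, Finset.sum_cons]
    exact (ENNReal.rpow_add_le_add_rpow _ _ (by norm_num) (by norm_num)).trans
      (add_le_add_right ih _)

private lemma tsum_rpow_half_le (f : ℕ → ℝ≥0∞) :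
    (∑' i, f i) ^ (1 / 2 : ℝ) ≤ ∑' i, (f i) ^ (1 / 2 : ℝ) := by
  refine le_of_tendsto' ((ENNReal.continuous_rpow_const.tendsto _).comp
    ENNReal.summable.hasSum) fun s => ?_
  exact (rpow_half_sum_le s f).trans (ENNReal.sum_le_tsum s)

private lemma eLpNorm_two_indicator {α : Type*} [MeasurableSpace α] (μ : Measure α)
    (f : α → ℂ) {s : Set α} (hs : MeasurableSet s) :
    eLpNorm (s.indicator f) 2 μ
      = (∫⁻ x in s, (‖f x‖₊ : ℝ≥0∞) ^ (2 : ℝ) ∂μ) ^ (1 / 2 : ℝ) := by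
  rw [eLpNorm_eq_lintegral_rpow_enorm_toReal (by norm_num) (by norm_num), ← lintegral_indicator hs]
  simp only [ENNReal.toReal_ofNat, enorm_eq_nnnorm]
  congr 1
  refine lintegral_congr fun x => ?_
  by_cases hx : x ∈ s <;> simp [hx]

private lemma eLpNorm_le_tsum_part {α : Type*} [MeasurableSpace α] (μ : Measure α)
    (f : α → ℂ) (s : ℕ → Set α) (hm : ∀ j, MeasurableSet (s j))
    (hd : Pairwise (Function.onFun Disjoint s)) (hc : (⋃ j, s j) = Set.univ) :
    eLpNorm f 2 μ ≤ ∑' j, eLpNorm ((s j).indicator f) 2 μ := by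
  rw [eLpNorm_eq_lintegral_rpow_enorm_toReal (by norm_num) (by norm_num)]
  simp only [ENNReal.toReal_ofNat, enorm_eq_nnnorm]
  have h : ∫⁻ x, (‖f x‖₊ : ℝ≥0∞) ^ (2 : ℝ) ∂μ
      = ∑' j, ∫⁻ x in s j, (‖f x‖₊ : ℝ≥0∞) ^ (2 : ℝ) ∂μ := by
    rw [← setLIntegral_univ, ← hc, lintegral_iUnion hm hd]
  rw [h]
  refine (tsum_rpow_half_le _).trans (le_of_eq ?_)
  exact tsum_congr fun j => (eLpNorm_two_indicator μ f (hm j)).symm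

private lemma dyadicR_mono : Monotone dyadicR := by
  apply monotone_nat_of_le_succ
  intro n
  cases n with
  | zero => simp [dyadicR]
  | succ m => simp only [dyadicR]; exact pow_le_pow_right₀ one_le_two (Nat.le_succ m)

/-- The dyadic shell `{R_k ≤ |g| < R_{k+1}}`. -/
private def shellSet {α : Type*} (g : α → ℝ) (k : ℕ) : Set α :=
  {x | dyadicR k ≤ |g x| ∧ |g x| < dyadicR (k + 1)}

private lemma blockE_eq {α : Type*} [MeasurableSpace α] (μ : Measure α) (a : α → ℝ)
    (u : α → ℂ) (k : ℕ) : blockE μ a u k = eLpNorm ((shellSet a k).indicator u) 2 μ := rfl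

private lemma shell_exists (t : ℝ) (ht : 0 ≤ t) :
    ∃ j, dyadicR j ≤ t ∧ t < dyadicR (j + 1) := by
  classical
  have hP : ∃ n : ℕ, t < 2 ^ n := pow_unbounded_of_one_lt t one_lt_two
  have hN : t < 2 ^ (Nat.find hP) := Nat.find_spec hP
  rcases hNeq : Nat.find hP with _ | m
  · refine ⟨0, by simpa [dyadicR] using ht, ?_⟩
    rw [hNeq] at hN; simpa [dyadicR] using hN
  · have hm : ¬ t < 2 ^ m := Nat.find_min hP (by omega)
    rw [hNeq] at hN
    exact ⟨m + 1, by simpa [dyadicR] using not_lt.1 hm, by simpa [dyadicR] using hN⟩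

private lemma shell_disjoint {α : Type*} (g : α → ℝ) :
    Pairwise (Function.onFun Disjoint (shellSet g)) := by
  intro i j hij
  simp only [Function.onFun, shellSet]
  rw [Set.disjoint_left]
  rintro x ⟨hi1, hi2⟩ ⟨hj1, hj2⟩
  rcases hij.lt_or_gt with h | h
  · exact absurd (hi2.trans_le ((dyadicR_mono h).trans hj1)) (lt_irrefl _)
  · exact absurd (hj2.trans_le ((dyadicR_mono h).trans hi1)) (lt_irrefl _)

private lemma key_window {μ lam t : ℝ} (hμ0 : 0 < μ) (hμ2 : μ < 2)
    (hlam : 0 ≤ lam) (ht1 : 1 ≤ t) (hS : lam < t ^ (-μ)) {i k : ℕ}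
    (hti : (2 : ℝ) ^ i ≤ t) (hti2 : t < 2 ^ (i + 1))
    (hk1 : dyadicR k ≤ Real.sqrt (lam + t ^ (-μ)) * t)
    (hk2 : Real.sqrt (lam + t ^ (-μ)) * t < dyadicR (k + 1)) :
    (i : ℝ) * (1 - μ / 2) < k ∧ (k : ℝ) < ((i : ℝ) + 1) * (1 - μ / 2) + 3 / 2 := by
  set θ : ℝ := 1 - μ / 2 with hθdef
  have hθpos : 0 < θ := by rw [hθdef]; linarith
  have htpos : (0 : ℝ) < t := by linarith
  have hrp : (0 : ℝ) < t ^ (-μ) := Real.rpow_pos_of_pos htpos _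
  have hsq : Real.sqrt (t ^ (-μ)) = t ^ (-(μ / 2)) := by
    rw [Real.sqrt_eq_rpow, ← Real.rpow_mul htpos.le]
    congr 1
    ring
  have hmul : ∀ c : ℝ, t ^ c * t = t ^ (c + 1) := fun c => by
    rw [Real.rpow_add htpos, Real.rpow_one]
  have hexp : -(μ / 2) + 1 = θ := by rw [hθdef]; ring
  have hlow : t ^ θ ≤ Real.sqrt (lam + t ^ (-μ)) * t := by
    have h1 : Real.sqrt (t ^ (-μ)) ≤ Real.sqrt (lam + t ^ (-μ)) :=
      Real.sqrt_le_sqrt (by linarith)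
    calc t ^ θ = t ^ (-(μ / 2)) * t := by rw [hmul, hexp]
      _ ≤ _ := mul_le_mul_of_nonneg_right (hsq ▸ h1) htpos.le
  have hhigh : Real.sqrt (lam + t ^ (-μ)) * t < 2 ^ (1 / 2 : ℝ) * t ^ θ := by
    have h1 : Real.sqrt (lam + t ^ (-μ)) < Real.sqrt (2 * t ^ (-μ)) :=
      Real.sqrt_lt_sqrt (by linarith) (by linarith)
    have h2 : Real.sqrt (2 * t ^ (-μ)) = 2 ^ (1 / 2 : ℝ) * t ^ (-(μ / 2)) := by
      rw [Real.sqrt_mul (by norm_num), hsq, Real.sqrt_eq_rpow]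
    calc Real.sqrt (lam + t ^ (-μ)) * t < (2 ^ (1 / 2 : ℝ) * t ^ (-(μ / 2))) * t :=
        mul_lt_mul_of_pos_right (h2 ▸ h1) htpos
      _ = 2 ^ (1 / 2 : ℝ) * t ^ θ := by rw [mul_assoc, hmul, hexp]
  have hdk1 : dyadicR (k + 1) = (2 : ℝ) ^ (k : ℝ) := by
    simp [dyadicR, Real.rpow_natCast]
  have hlowk : (i : ℝ) * θ < k := by
    have h1 : (2 : ℝ) ^ ((i : ℝ) * θ) ≤ t ^ θ := by
      have h := Real.rpow_le_rpow (by positivity) hti hθpos.le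
      rwa [← Real.rpow_natCast 2 i, ← Real.rpow_mul (by norm_num)] at h
    have h2 : t ^ θ < (2 : ℝ) ^ (k : ℝ) := hlow.trans_lt (hk2.trans_eq hdk1)
    exact (Real.rpow_lt_rpow_left_iff one_lt_two).1 (h1.trans_lt h2)
  refine ⟨hlowk, ?_⟩
  have hknz : 0 < k := by
    by_contra h
    push_neg at h
    interval_cases k
    · have h0 : (0 : ℝ) ≤ (i : ℝ) * θ := mul_nonneg (Nat.cast_nonneg i) hθpos.le
      simp only [Nat.cast_zero] at hlowk
      linarith
  obtain ⟨l, rfl⟩ : ∃ l, k = l + 1 := ⟨k - 1, by omega⟩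
  have htθ : t ^ θ < (2 : ℝ) ^ (((i : ℝ) + 1) * θ) := by
    have h := Real.rpow_lt_rpow htpos.le hti2 hθpos
    rw [← Real.rpow_natCast 2 (i + 1), ← Real.rpow_mul (by norm_num)] at h
    push_cast at h
    exact h
  have h3 : (2 : ℝ) ^ ((l : ℝ)) < 2 ^ (1 / 2 + ((i : ℝ) + 1) * θ) := by
    have ha : dyadicR (l + 1) = (2 : ℝ) ^ (l : ℝ) := by
      simp [dyadicR, Real.rpow_natCast]
    calc (2 : ℝ) ^ (l : ℝ) = dyadicR (l + 1) := ha.symm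
      _ ≤ Real.sqrt (lam + t ^ (-μ)) * t := hk1
      _ < 2 ^ (1 / 2 : ℝ) * t ^ θ := hhigh
      _ ≤ 2 ^ (1 / 2 : ℝ) * 2 ^ (((i : ℝ) + 1) * θ) :=
        mul_le_mul_of_nonneg_left htθ.le (by positivity)
      _ = 2 ^ (1 / 2 + ((i : ℝ) + 1) * θ) := (Real.rpow_add two_pos _ _).symm
  have h4 := (Real.rpow_lt_rpow_left_iff one_lt_two).1 h3
  push_cast
  linarith

private lemma cbound {μ lam s : ℝ} (hμ0 : 0 < μ) (hlam : 0 ≤ lam) (hs1 : 1 ≤ s)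
    {i : ℕ} (hs2 : s < 2 ^ (i + 1)) :
    (lam + s ^ (-μ)) ^ (-(1 / 4 : ℝ)) ≤ (2 : ℝ) ^ (((i : ℝ) + 1) * μ / 4) := by
  have hsp : (0 : ℝ) < s := by linarith
  have hrp : (0 : ℝ) < s ^ (-μ) := Real.rpow_pos_of_pos hsp _
  have h1 : (lam + s ^ (-μ)) ^ (-(1 / 4 : ℝ)) ≤ (s ^ (-μ)) ^ (-(1 / 4 : ℝ)) :=
    Real.rpow_le_rpow_of_nonpos hrp (by linarith) (by norm_num)
  have h2 : (s ^ (-μ)) ^ (-(1 / 4 : ℝ)) = s ^ (μ / 4) := by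
    rw [← Real.rpow_mul hsp.le]
    congr 1
    ring
  have h3 : s ^ (μ / 4) ≤ ((2 : ℝ) ^ (i + 1)) ^ (μ / 4 : ℝ) :=
    Real.rpow_le_rpow hsp.le hs2.le (by positivity)
  have h4 : ((2 : ℝ) ^ (i + 1)) ^ (μ / 4 : ℝ) = (2 : ℝ) ^ (((i : ℝ) + 1) * μ / 4) := by
    rw [← Real.rpow_natCast 2 (i + 1), ← Real.rpow_mul (by norm_num)]
    push_cast
    ring_nf
  calc (lam + s ^ (-μ)) ^ (-(1 / 4 : ℝ)) ≤ s ^ (μ / 4) := h1.trans_eq h2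
    _ ≤ _ := h3.trans_eq h4

/-- for `μ ∈ (0,2)` there is `C = C(μ) > 0`, independent of `λ ≥ 0`
(in particular uniform on any `[0, λ₀]`), such that with
`f_λ(x) = (λ + ⟨x⟩^{-μ})^{1/2}` and `F₋` the indicator of `{λ < ⟨x⟩^{-μ}}`,
`‖f_λ^{-1/2} F₋ u‖_{B(f_λ⟨x⟩)} ≤ C ‖u‖_{B(⟨x⟩)}` for all `u ∈ B(⟨x⟩)`. -/
theorem stmt13 (d : ℕ) (μ : ℝ) (hμ0 : 0 < μ) (hμ2 : μ < 2) :
    ∃ C > (0 : ℝ), ∀ lam : ℝ, 0 ≤ lam → ∀ u : EuclideanSpace ℝ (Fin d) → ℂ,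
      besovE volume (fun x => Real.sqrt (lam + jap x ^ (-μ)) * jap x)
          (Set.indicator {x | lam < jap x ^ (-μ)}
            (fun x => (((lam + jap x ^ (-μ)) ^ (-(1 / 4 : ℝ)) : ℝ) • u x)))
        ≤ ENNReal.ofReal C * besovE volume jap u := by
  have hθpos : 0 < 1 - μ / 2 := by linarith
  have hθ1 : 1 - μ / 2 < 1 := by linarith
  refine ⟨3 * 2 ^ (3 / 4 : ℝ), by positivity, ?_⟩
  intro lam hlam u
  set a : EuclideanSpace ℝ (Fin d) → ℝ :=
    fun x => Real.sqrt (lam + jap x ^ (-μ)) * jap x with ha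
  set v : EuclideanSpace ℝ (Fin d) → ℂ :=
    Set.indicator {x | lam < jap x ^ (-μ)}
      (fun x => (((lam + jap x ^ (-μ)) ^ (-(1 / 4 : ℝ)) : ℝ) • u x)) with hv
  have hjap1 : ∀ x : EuclideanSpace ℝ (Fin d), 1 ≤ jap x := fun x => by
    have h := Real.sqrt_le_sqrt (show (1 : ℝ) ≤ ‖x‖ ^ 2 + 1 by nlinarith [sq_nonneg ‖x‖])
    simpa [jap] using h
  have hjabs : ∀ x : EuclideanSpace ℝ (Fin d), |jap x| = jap x := fun x =>
    abs_of_nonneg (le_trans zero_le_one (hjap1 x))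
  have hjc : Continuous (jap (d := d)) :=
    Real.continuous_sqrt.comp ((continuous_norm.pow 2).add continuous_const)
  have hjm : Measurable (jap (d := d)) := hjc.measurable
  have hJm : ∀ j, MeasurableSet (shellSet (jap (d := d)) j) := by
    intro j
    have hg : Measurable fun x : EuclideanSpace ℝ (Fin d) => |jap x| := hjm.abs
    rw [shellSet, Set.setOf_and]
    exact (measurableSet_le measurable_const hg).inter
      (measurableSet_lt hg measurable_const)
  have hJd := shell_disjoint (jap (d := d))
  have hJu : (⋃ j, shellSet (jap (d := d)) j) = Set.univ := by
    ext x
    simp only [Set.mem_iUnion, shellSet, Set.mem_setOf_eq, Set.mem_univ, iff_true]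
    exact shell_exists |jap x| (abs_nonneg _)
  -- Step 1&2: decompose every a-block along the jap-shells
  have step12 : besovE volume a v ≤
      ∑' j, ∑' k, ENNReal.ofReal (Real.sqrt (dyadicR (k + 1))) *
        eLpNorm ((shellSet a k ∩ shellSet jap j).indicator v) 2 volume := by
    rw [← ENNReal.tsum_comm]
    refine ENNReal.tsum_le_tsum fun k => ?_
    rw [blockE_eq, ENNReal.tsum_mul_left]
    refine mul_le_mul_right ?_ _
    refine (eLpNorm_le_tsum_part volume _ _ hJm hJd hJu).trans_eq ?_
    exact tsum_congr fun j => by rw [Set.indicator_indicator, Set.inter_comm]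
  -- Step 3: per jap-shell estimate
  have step3 : ∀ j, (∑' k, ENNReal.ofReal (Real.sqrt (dyadicR (k + 1))) *
        eLpNorm ((shellSet a k ∩ shellSet jap j).indicator v) 2 volume) ≤
      ENNReal.ofReal (3 * 2 ^ (3 / 4 : ℝ)) *
        (ENNReal.ofReal (Real.sqrt (dyadicR (j + 1))) * blockE volume jap u j) := by
    rintro (_ | i)
    · -- shell 0 is empty since jap ≥ 1
      have hzero : ∀ k : ℕ, ENNReal.ofReal (Real.sqrt (dyadicR (k + 1))) *
          eLpNorm ((shellSet a k ∩ shellSet jap 0).indicator v) 2 volume = 0 := by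
        intro k
        have hempty : (shellSet a k ∩ shellSet (jap (d := d)) 0).indicator v
            = fun _ => (0 : ℂ) := by
          funext x
          rw [Set.indicator_of_notMem]
          rintro ⟨-, -, h2⟩
          rw [hjabs x] at h2
          have := hjap1 x
          simp only [dyadicR] at h2
          norm_num at h2
          linarith
        rw [hempty, eLpNorm_zero', mul_zero]
      simp [hzero]
    · -- main shell j = i+1
      set m := Nat.floor ((i : ℝ) * (1 - μ / 2)) with hm
      -- uniform norm bound of each piece
      have hnormb : ∀ k, eLpNorm ((shellSet a k ∩ shellSet jap (i + 1)).indicator v) 2 volume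
          ≤ ENNReal.ofReal ((2 : ℝ) ^ (((i : ℝ) + 1) * μ / 4)) *
            blockE volume jap u (i + 1) := by
        intro k
        have hpt : ∀ y, ‖(shellSet a k ∩ shellSet (jap (d := d)) (i + 1)).indicator v y‖ ≤
            ‖(((2 : ℝ) ^ (((i : ℝ) + 1) * μ / 4)) •
              (shellSet (jap (d := d)) (i + 1)).indicator u) y‖ := by
          intro y
          by_cases hy : y ∈ shellSet a k ∩ shellSet (jap (d := d)) (i + 1)
          · rw [Set.indicator_of_mem hy]
            have hyJ := hy.2
            have hjy1 : 1 ≤ jap y := hjap1 y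
            have hjy2 : jap y < 2 ^ (i + 1) := by
              have h2 := hyJ.2
              rwa [hjabs y, show dyadicR (i + 2) = (2 : ℝ) ^ (i + 1) from rfl] at h2
            have hRHS : ‖(((2 : ℝ) ^ (((i : ℝ) + 1) * μ / 4)) •
                (shellSet (jap (d := d)) (i + 1)).indicator u) y‖
                = (2 : ℝ) ^ (((i : ℝ) + 1) * μ / 4) * ‖u y‖ := by
              rw [Pi.smul_apply, Set.indicator_of_mem hyJ, norm_smul, Real.norm_eq_abs,
                abs_of_nonneg (by positivity)]
            rw [hRHS]
            by_cases hyS : lam < jap y ^ (-μ)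
            · rw [hv, Set.indicator_of_mem
                (show y ∈ {x | lam < jap x ^ (-μ)} from hyS), norm_smul, Real.norm_eq_abs,
                abs_of_nonneg (by positivity)]
              exact mul_le_mul_of_nonneg_right (cbound hμ0 hlam hjy1 hjy2) (norm_nonneg _)
            · rw [hv, Set.indicator_of_notMem
                (show y ∉ {x | lam < jap x ^ (-μ)} from hyS)]
              simp
              positivity
          · rw [Set.indicator_of_notMem hy]
            simp
            positivity
        refine (eLpNorm_mono hpt).trans ?_
        refine (MeasureTheory.eLpNorm_const_smul_le).trans_eq ?_
        rw [blockE_eq]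
        congr 1
        exact Real.enorm_eq_ofReal (by positivity)
      -- witnesses for nonzero pieces
      have hwit : ∀ k,
          eLpNorm ((shellSet a k ∩ shellSet jap (i + 1)).indicator v) 2 volume ≠ 0 →
          ∃ x, x ∈ shellSet a k ∩ shellSet (jap (d := d)) (i + 1) ∧ v x ≠ 0 := by
        intro k hk
        by_contra h
        push_neg at h
        apply hk
        have hfun : (shellSet a k ∩ shellSet (jap (d := d)) (i + 1)).indicator v
            = fun _ => (0 : ℂ) := by
          funext x
          by_cases hx : x ∈ shellSet a k ∩ shellSet (jap (d := d)) (i + 1)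
          · rw [Set.indicator_of_mem hx]; exact h x hx
          · exact Set.indicator_of_notMem hx _
        rw [hfun]
        exact eLpNorm_zero'
      -- key: nonzero pieces live in a 3-element window and admit the dyadic bound
      have hkey : ∀ k, (ENNReal.ofReal (Real.sqrt (dyadicR (k + 1))) *
            eLpNorm ((shellSet a k ∩ shellSet jap (i + 1)).indicator v) 2 volume) ≠ 0 →
          (m + 1 ≤ k ∧ k ≤ m + 3) ∧
          ENNReal.ofReal (Real.sqrt (dyadicR (k + 1))) *
            eLpNorm ((shellSet a k ∩ shellSet jap (i + 1)).indicator v) 2 volume ≤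
          ENNReal.ofReal (2 ^ (3 / 4 : ℝ)) *
            (ENNReal.ofReal (Real.sqrt (dyadicR (i + 2))) * blockE volume jap u (i + 1)) := by
        intro k hk
        have hne : eLpNorm ((shellSet a k ∩ shellSet jap (i + 1)).indicator v) 2 volume ≠ 0 :=
          fun h => hk (by rw [h, mul_zero])
        obtain ⟨x, ⟨hxA, hxJ⟩, hxv⟩ := hwit k hne
        have hxS : lam < jap x ^ (-μ) := by
          by_contra hS
          exact hxv (by rw [hv, Set.indicator_of_notMem
            (show x ∉ {x | lam < jap x ^ (-μ)} from hS)])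
        have haabs : |a x| = a x :=
          abs_of_nonneg (mul_nonneg (Real.sqrt_nonneg _)
            (le_trans zero_le_one (hjap1 x)))
        have hxA1 : dyadicR k ≤ Real.sqrt (lam + jap x ^ (-μ)) * jap x := by
          have := hxA.1; rwa [haabs] at this
        have hxA2 : Real.sqrt (lam + jap x ^ (-μ)) * jap x < dyadicR (k + 1) := by
          have := hxA.2; rwa [haabs] at this
        have hxJ1 : (2 : ℝ) ^ i ≤ jap x := by
          have := hxJ.1
          rwa [hjabs x, show dyadicR (i + 1) = (2 : ℝ) ^ i from rfl] at this
        have hxJ2 : jap x < 2 ^ (i + 1) := by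
          have := hxJ.2
          rwa [hjabs x, show dyadicR (i + 2) = (2 : ℝ) ^ (i + 1) from rfl] at this
        obtain ⟨hw1, hw2⟩ :=
          key_window hμ0 hμ2 hlam (hjap1 x) hxS hxJ1 hxJ2 hxA1 hxA2
        have hmfl : (m : ℝ) ≤ (i : ℝ) * (1 - μ / 2) :=
          Nat.floor_le (by positivity)
        have hmfl2 : (i : ℝ) * (1 - μ / 2) < m + 1 := Nat.lt_floor_add_one _
        have hk_lo : m + 1 ≤ k := by
          have : (m : ℝ) < k := lt_of_le_of_lt hmfl hw1
          exact_mod_cast this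
        have hk_hi : k ≤ m + 3 := by
          have h5 : (k : ℝ) < (m : ℝ) + 4 := by nlinarith
          have : k < m + 4 := by exact_mod_cast h5
          omega
        refine ⟨⟨hk_lo, hk_hi⟩, ?_⟩
        -- coefficient bound
        have hcoef : Real.sqrt (dyadicR (k + 1)) ≤
            (2 : ℝ) ^ ((((i : ℝ) + 1) * (1 - μ / 2)) / 2 + 3 / 4) := by
          have h1 : Real.sqrt (dyadicR (k + 1)) = (2 : ℝ) ^ ((k : ℝ) / 2) := by
            show Real.sqrt ((2 : ℝ) ^ k) = _
            rw [Real.sqrt_eq_rpow, ← Real.rpow_natCast 2 k, ← Real.rpow_mul (by norm_num)]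
            ring_nf
          rw [h1]
          exact (Real.rpow_le_rpow_left_iff one_lt_two).2 (by linarith)
        have hPQ : (2 : ℝ) ^ ((((i : ℝ) + 1) * (1 - μ / 2)) / 2 + 3 / 4) *
            (2 : ℝ) ^ (((i : ℝ) + 1) * μ / 4)
            = 2 ^ (3 / 4 : ℝ) * Real.sqrt (dyadicR (i + 2)) := by
          have hsq2 : Real.sqrt (dyadicR (i + 2)) = (2 : ℝ) ^ (((i : ℝ) + 1) / 2) := by
            show Real.sqrt ((2 : ℝ) ^ (i + 1)) = _
            rw [Real.sqrt_eq_rpow, ← Real.rpow_natCast 2 (i + 1),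
              ← Real.rpow_mul (by norm_num)]
            push_cast
            ring_nf
          rw [hsq2, ← Real.rpow_add two_pos, ← Real.rpow_add two_pos]
          congr 1
          ring
        calc ENNReal.ofReal (Real.sqrt (dyadicR (k + 1))) *
              eLpNorm ((shellSet a k ∩ shellSet jap (i + 1)).indicator v) 2 volume
            ≤ ENNReal.ofReal ((2 : ℝ) ^ ((((i : ℝ) + 1) * (1 - μ / 2)) / 2 + 3 / 4)) *
              (ENNReal.ofReal ((2 : ℝ) ^ (((i : ℝ) + 1) * μ / 4)) *
                blockE volume jap u (i + 1)) :=
            mul_le_mul' (ENNReal.ofReal_le_ofReal hcoef) (hnormb k)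
          _ = ENNReal.ofReal ((2 : ℝ) ^ ((((i : ℝ) + 1) * (1 - μ / 2)) / 2 + 3 / 4) *
                (2 : ℝ) ^ (((i : ℝ) + 1) * μ / 4)) * blockE volume jap u (i + 1) := by
            rw [← mul_assoc, ← ENNReal.ofReal_mul (by positivity)]
          _ = ENNReal.ofReal (2 ^ (3 / 4 : ℝ) * Real.sqrt (dyadicR (i + 2))) *
                blockE volume jap u (i + 1) := by rw [hPQ]
          _ = ENNReal.ofReal (2 ^ (3 / 4 : ℝ)) *
                (ENNReal.ofReal (Real.sqrt (dyadicR (i + 2))) *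
                  blockE volume jap u (i + 1)) := by
            rw [ENNReal.ofReal_mul (by positivity), mul_assoc]
      -- sum the at most three nonzero pieces
      have hz : ∀ k ∉ Finset.Icc (m + 1) (m + 3),
          ENNReal.ofReal (Real.sqrt (dyadicR (k + 1))) *
            eLpNorm ((shellSet a k ∩ shellSet jap (i + 1)).indicator v) 2 volume = 0 := by
        intro k hk
        by_contra h
        exact hk (Finset.mem_Icc.2 (hkey k h).1)
      rw [tsum_eq_sum hz]
      have hble : ∀ k ∈ Finset.Icc (m + 1) (m + 3),
          ENNReal.ofReal (Real.sqrt (dyadicR (k + 1))) *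
            eLpNorm ((shellSet a k ∩ shellSet jap (i + 1)).indicator v) 2 volume ≤
          ENNReal.ofReal (2 ^ (3 / 4 : ℝ)) *
            (ENNReal.ofReal (Real.sqrt (dyadicR (i + 2))) * blockE volume jap u (i + 1)) := by
        intro k _
        by_cases h : (ENNReal.ofReal (Real.sqrt (dyadicR (k + 1))) *
            eLpNorm ((shellSet a k ∩ shellSet jap (i + 1)).indicator v) 2 volume) = 0
        · rw [h]; exact zero_le
        · exact (hkey k h).2
      calc (∑ k ∈ Finset.Icc (m + 1) (m + 3),
            ENNReal.ofReal (Real.sqrt (dyadicR (k + 1))) *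
              eLpNorm ((shellSet a k ∩ shellSet jap (i + 1)).indicator v) 2 volume)
          ≤ ∑ _k ∈ Finset.Icc (m + 1) (m + 3),
            ENNReal.ofReal (2 ^ (3 / 4 : ℝ)) *
              (ENNReal.ofReal (Real.sqrt (dyadicR (i + 2))) *
                blockE volume jap u (i + 1)) := Finset.sum_le_sum hble
        _ = 3 * (ENNReal.ofReal (2 ^ (3 / 4 : ℝ)) *
              (ENNReal.ofReal (Real.sqrt (dyadicR (i + 2))) *
                blockE volume jap u (i + 1))) := by
            rw [Finset.sum_const, Nat.card_Icc,
              show m + 3 + 1 - (m + 1) = 3 from by omega, nsmul_eq_mul]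
            norm_num
        _ = ENNReal.ofReal (3 * 2 ^ (3 / 4 : ℝ)) *
              (ENNReal.ofReal (Real.sqrt (dyadicR (i + 1 + 1))) *
                blockE volume jap u (i + 1)) := by
            rw [ENNReal.ofReal_mul (by norm_num : (0:ℝ) ≤ 3), ENNReal.ofReal_ofNat,
              mul_assoc]
  -- assemble
  refine step12.trans ?_
  calc (∑' j, ∑' k, ENNReal.ofReal (Real.sqrt (dyadicR (k + 1))) *
        eLpNorm ((shellSet a k ∩ shellSet jap j).indicator v) 2 volume)
      ≤ ∑' j, ENNReal.ofReal (3 * 2 ^ (3 / 4 : ℝ)) *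
          (ENNReal.ofReal (Real.sqrt (dyadicR (j + 1))) * blockE volume jap u j) :=
      ENNReal.tsum_le_tsum step3
    _ = ENNReal.ofReal (3 * 2 ^ (3 / 4 : ℝ)) * besovE volume jap u := by
      rw [ENNReal.tsum_mul_left]; rfl
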